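/- For every n, the word h_n = ψ_{x_1}⋯ψ_{x_n}(x_{n+1}) is primitive, i.e., h_n = u^m with m ≥ 1 implies m = 1. -/
import Mathlib


variable {A : Type*} [DecidableEq A]

/-- `psiW a` is the morphism with `ψ_a(a) = a` and `ψ_a(x) = ax` for `x ≠ a`. -/
def psiW (a : A) (w : List A) : List A :=
  w.flatMap (fun b => if b = a then [a] else [a, b])

/-- `muW x n = ψ_{x 1} ∘ ⋯ ∘ ψ_{x n}`. -/
def muW (x : ℕ → A) : ℕ → List A → List A
  | 0 => id
  | n + 1 => fun w => muW x n (psiW (x (n + 1)) w)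

/-- `hW x n = μ_n (x_{n+1})`. -/
def hW (x : ℕ → A) (n : ℕ) : List A := muW x n [x (n + 1)]

/-- `p` is the palindromic right-closure of `w`: the shortest palindrome having `w`
as a prefix. -/
def IsPalClosure (w p : List A) : Prop :=
  w <+: p ∧ p.reverse = p ∧
    ∀ q : List A, w <+: q → q.reverse = q → p.length ≤ q.length

/-- The finite word `w` is a prefix of the infinite word `s`. -/
def PrefInf (w : List A) (s : ℕ → A) : Prop :=
  ∀ i : ℕ, ∀ h : i < w.length, w[i] = s i

/-- Number of occurrences (positions) of `w` as a factor of `v`. -/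
def occ (w v : List A) : ℕ :=
  (List.range (v.length + 1)).countP
    (fun i => decide (i + w.length ≤ v.length ∧ (v.drop i).take w.length = w))

/-- `cat z k = z 1 ++ z 2 ++ ⋯ ++ z k`. -/
def cat (z : ℕ → List A) (k : ℕ) : List A := ((List.range' 1 k).map z).flatten

/-- `z` is the Ziv-Lempel factorization of the infinite word `s`: each `z m` is
the shortest prefix of `z m · z (m+1) ⋯` occurring only once in `z 1 ⋯ z m`. -/
def IsZFact (s : ℕ → A) (z : ℕ → List A) : Prop :=
  ∀ m : ℕ, 1 ≤ m → z m ≠ [] ∧ PrefInf (cat z m) s ∧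
    occ (z m) (cat z m) = 1 ∧
    ∀ p : List A, p <+: z m → p ≠ z m → 2 ≤ occ p (cat z m)

/-- `c` is the Crochemore factorization of the infinite word `s`: each `c m` is
either a fresh letter, or the longest prefix of `c m · c (m+1) ⋯` occurring
twice in `c 1 ⋯ c m`. -/
def IsCFact (s : ℕ → A) (c : ℕ → List A) : Prop :=
  ∀ m : ℕ, 1 ≤ m → c m ≠ [] ∧ PrefInf (cat c m) s ∧
    ((∃ a : A, c m = [a] ∧ a ∉ cat c (m - 1)) ∨
      (2 ≤ occ (c m) (cat c m) ∧
        occ (c m ++ [s (cat c m).length]) (cat c m ++ [s (cat c m).length]) = 1))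

lemma psiW_cons (a b : A) (t : List A) :
    psiW a (b :: t) = (if b = a then [a] else [a, b]) ++ psiW a t := by
  simp [psiW]

lemma psiW_append (a : A) (s t : List A) :
    psiW a (s ++ t) = psiW a s ++ psiW a t := by
  simp [psiW]

lemma psiW_eq_nil {a : A} {w : List A} (h : psiW a w = []) : w = [] := by
  cases w with
  | nil => rfl
  | cons b t => rw [psiW_cons] at h; split at h <;> simp at h

lemma psiW_head {a : A} {w : List A} (h : w ≠ []) : (psiW a w).head? = some a := by
  cases w with
  | nil => exact absurd rfl h
  | cons b t => rw [psiW_cons]; split <;> rfl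

lemma psiW_inj (a : A) : ∀ w₁ w₂ : List A, psiW a w₁ = psiW a w₂ → w₁ = w₂ := by
  intro w₁
  induction w₁ with
  | nil =>
    intro w₂ h
    exact (psiW_eq_nil h.symm).symm
  | cons b t ih =>
    intro w₂ h
    cases w₂ with
    | nil =>
      have := psiW_eq_nil (a := a) (w := b :: t) (by simpa [psiW] using h)
      simp at this
    | cons c s =>
      rw [psiW_cons, psiW_cons] at h
      by_cases hb : b = a <;> by_cases hc : c = a <;> simp [hb, hc] at h
      · rw [hb, hc, ih s h]
      · -- h : psiW a t = c :: psiW a s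
        have ht : t ≠ [] := by
          intro h0; rw [h0] at h; simp [psiW] at h
        have := psiW_head (a := a) ht
        rw [h] at this
        simp at this
        exact absurd this hc
      · have hs : s ≠ [] := by
          intro h0; rw [h0] at h; simp [psiW] at h
        have := psiW_head (a := a) hs
        rw [← h] at this
        simp at this
        exact absurd this hb
      · rw [ih s h.2, h.1]

lemma psiW_factor (a : A) : ∀ (w s t : List A), psiW a w = s ++ t →
    (t = [] ∨ t.head? = some a) → ∃ v, s = psiW a v := by
  intro w
  induction w with
  | nil =>
    intro s t h _
    have : s = [] := by
      have := h.symm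
      simp [psiW] at this
      exact this.1
    exact ⟨[], by simp [this, psiW]⟩
  | cons b w ih =>
    intro s t h ht
    cases s with
    | nil => exact ⟨[], by simp [psiW]⟩
    | cons c s' =>
      rw [psiW_cons] at h
      by_cases hb : b = a
      · simp [hb] at h
        obtain ⟨hca, h⟩ := h
        subst hca
        obtain ⟨v, hv⟩ := ih s' t h ht
        exact ⟨a :: v, by simp [psiW_cons, ← hv]⟩
      · simp [hb] at h
        obtain ⟨hca, h⟩ := h
        cases s' with
        | nil =>
          simp at h
          rcases ht with ht | ht
          · rw [ht] at h; simp at h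
          · rw [← h] at ht
            simp at ht
            exact absurd ht hb
        | cons d s'' =>
          simp at h
          obtain ⟨hdb, h⟩ := h
          subst hdb
          obtain ⟨v, hv⟩ := ih s'' t h ht
          exact ⟨b :: v, by simp [psiW_cons, hb, ← hv, ← hca]⟩

lemma psiW_flatten_replicate (a : A) (m : ℕ) (v : List A) :
    psiW a ((List.replicate m v).flatten) = (List.replicate m (psiW a v)).flatten := by
  induction m with
  | zero => rfl
  | succ k ih => simp [List.replicate_succ, psiW_append, ih]

lemma psiW_power (a : A) (w u : List A) (m : ℕ) (hm : 2 ≤ m)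
    (h : psiW a w = (List.replicate m u).flatten) :
    ∃ v, u = psiW a v ∧ w = (List.replicate m v).flatten := by
  cases u with
  | nil =>
    refine ⟨[], by simp [psiW], ?_⟩
    have : psiW a w = [] := by simpa using h
    simpa using psiW_eq_nil this
  | cons c u' =>
    obtain ⟨k, rfl⟩ : ∃ k, m = k + 2 := ⟨m - 2, by omega⟩
    have hrep : (List.replicate (k + 2) (c :: u')).flatten
        = (c :: u') ++ (List.replicate (k + 1) (c :: u')).flatten := by
      rw [List.replicate_succ, List.flatten_cons]
    have hwne : w ≠ [] := by
      intro h0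
      rw [h0] at h
      simp [psiW, hrep] at h
    have hca : a = c := by
      have h1 := psiW_head (a := a) hwne
      rw [h, hrep] at h1
      simpa using h1.symm
    have htl : (List.replicate (k + 1) (c :: u')).flatten = [] ∨
        ((List.replicate (k + 1) (c :: u')).flatten).head? = some a := by
      right
      rw [List.replicate_succ, List.flatten_cons]
      simp [← hca]
    rw [hrep] at h
    obtain ⟨v, hv⟩ := psiW_factor a w (c :: u') _ h htl
    refine ⟨v, hv, ?_⟩
    apply psiW_inj a
    rw [psiW_flatten_replicate, ← hv, hrep]
    exact h

lemma muW_succ (x : ℕ → A) (n : ℕ) (w : List A) :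
    muW x (n + 1) w = psiW (x 1) (muW (fun k => x (k + 1)) n w) := by
  induction n generalizing x w with
  | zero => rfl
  | succ k ih =>
    show muW x (k + 1) (psiW (x (k + 2)) w) = _
    rw [ih]
    rfl

lemma hW_succ (x : ℕ → A) (k : ℕ) :
    hW x (k + 1) = psiW (x 1) (hW (fun j => x (j + 1)) k) := by
  unfold hW
  rw [muW_succ]

theorem h_primitive (x : ℕ → A) (n : ℕ) :
    ∀ (w : List A) (m : ℕ), 1 ≤ m → hW x n = (List.replicate m w).flatten → m = 1 := by
  induction n generalizing x with
  | zero =>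
    intro w m hm h
    have hlen : 1 = m * w.length := by
      have := congrArg List.length h
      simpa [hW, muW, List.length_flatten, List.map_replicate, List.sum_replicate,
        smul_eq_mul] using this
    have := Nat.eq_one_of_mul_eq_one_right hlen.symm
    exact this
  | succ k ih =>
    intro w m hm h
    rcases Nat.lt_or_ge m 2 with h2 | h2
    · omega
    · rw [hW_succ] at h
      obtain ⟨v, _, hw⟩ := psiW_power (x 1) _ _ m h2 h
      exact ih _ v m hm hw
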